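/- arXiv:2509.21675 — 6 statements merged into one kernel-verified Lean document; each statement's English description precedes it below -/
import Mathlib

section
/- Let N be an orthonormal basis of the null space of a full-row-rank matrix A (i.e., AN = 0, N^T N = I, AA^T ≻ 0), let H be symmetric, and let λ_min = min over unit vectors ξ with Aξ = 0 of ξ^T H ξ. Then for every λ > -λ_min, the KKT system [[H + λI, A^T],[A, 0]] [p; q] = [-g; 0] has a unique solution p(λ) = -N (N^T H N + λI)^{-1} N^T g, and the map λ ↦ ‖p(λ)‖ is monotonically nonincreasing on (-λ_min, ∞). -/
open Matrix

/-- Newton subproblem: for `λ > -λ_min` the KKT system has a unique solution with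
`p(λ) = -N(NᵀHN + λI)⁻¹Nᵀg`, and `‖p(λ)‖` is monotonically nonincreasing. -/
theorem stmt_0 (n m k : ℕ)
    (A : Matrix (Fin m) (Fin n) ℝ) (H : Matrix (Fin n) (Fin n) ℝ)
    (N : Matrix (Fin n) (Fin k) ℝ) (g : Fin n → ℝ)
    (hH : Hᵀ = H)
    (hfull : (A * Aᵀ).PosDef)
    (hAN : A * N = 0) (hNN : Nᵀ * N = 1)
    (hrange : ∀ ξ : Fin n → ℝ, A.mulVec ξ = 0 ↔ ∃ w : Fin k → ℝ, ξ = N.mulVec w)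
    (lammin : ℝ)
    (hmin : IsLeast {t : ℝ | ∃ ξ : Fin n → ℝ, A.mulVec ξ = 0 ∧ ξ ⬝ᵥ ξ = 1 ∧
      t = ξ ⬝ᵥ H.mulVec ξ} lammin)
    (p : ℝ → (Fin n → ℝ))
    (hp : ∀ lam : ℝ, p lam = -(N * (Nᵀ * H * N + lam • (1 : Matrix (Fin k) (Fin k) ℝ))⁻¹
      * Nᵀ).mulVec g) :
    (∀ lam : ℝ, -lammin < lam →
      (∃! pq : (Fin n → ℝ) × (Fin m → ℝ),
        (H + lam • (1 : Matrix (Fin n) (Fin n) ℝ)).mulVec pq.1 + Aᵀ.mulVec pq.2 = -g ∧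
        A.mulVec pq.1 = 0) ∧
      (∀ pq : (Fin n → ℝ) × (Fin m → ℝ),
        (H + lam • (1 : Matrix (Fin n) (Fin n) ℝ)).mulVec pq.1 + Aᵀ.mulVec pq.2 = -g →
        A.mulVec pq.1 = 0 → pq.1 = p lam)) ∧
    (∀ lam₁ lam₂ : ℝ, -lammin < lam₁ → lam₁ ≤ lam₂ →
      Real.sqrt (p lam₂ ⬝ᵥ p lam₂) ≤ Real.sqrt (p lam₁ ⬝ᵥ p lam₁)) := by
  classical
  -- notation
  set c : Fin k → ℝ := Nᵀ *ᵥ g with hc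
  set M : ℝ → Matrix (Fin k) (Fin k) ℝ :=
    fun lam => Nᵀ * H * N + lam • (1 : Matrix (Fin k) (Fin k) ℝ) with hM
  -- basic vector identities
  have hNTN : ∀ u : Fin k → ℝ, Nᵀ *ᵥ (N *ᵥ u) = u := by
    intro u; rw [mulVec_mulVec, hNN, one_mulVec]
  have hnorm : ∀ u : Fin k → ℝ, (N *ᵥ u) ⬝ᵥ (N *ᵥ u) = u ⬝ᵥ u := by
    intro u
    rw [dotProduct_mulVec, ← mulVec_transpose, hNTN]
  have hANvec : ∀ u : Fin k → ℝ, A *ᵥ (N *ᵥ u) = 0 := by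
    intro u; rw [mulVec_mulVec, hAN, zero_mulVec]
  have hdotN : ∀ (x : Fin n → ℝ) (z : Fin n → ℝ), x ⬝ᵥ (H *ᵥ z) = (H *ᵥ x) ⬝ᵥ z := by
    intro x z
    rw [dotProduct_mulVec, ← mulVec_transpose, hH]
  -- quadratic form of M
  have hquad : ∀ (lam : ℝ) (u : Fin k → ℝ),
      u ⬝ᵥ (M lam *ᵥ u) = (N *ᵥ u) ⬝ᵥ (H *ᵥ (N *ᵥ u)) + lam * (u ⬝ᵥ u) := by
    intro lam u
    have h1 : M lam *ᵥ u = (Nᵀ * H * N) *ᵥ u + lam • u := by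
      simp only [hM]
      simp [add_mulVec, smul_mulVec, one_mulVec]
    rw [h1, dotProduct_add, dotProduct_smul]
    congr 1
    have : (Nᵀ * H * N) *ᵥ u = Nᵀ *ᵥ (H *ᵥ (N *ᵥ u)) := by
      simp [mulVec_mulVec, Matrix.mul_assoc]
    rw [this, dotProduct_mulVec, ← mulVec_transpose, transpose_transpose]
  -- positive definiteness of M lam
  have hPD : ∀ lam : ℝ, -lammin < lam → (M lam).PosDef := by
    intro lam hlam
    rw [posDef_iff_dotProduct_mulVec]
    constructor
    · show (M lam)ᴴ = M lam
      rw [conjTranspose_eq_transpose_of_trivial, hM]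
      simp only [transpose_add, transpose_smul, transpose_one, transpose_mul,
        transpose_transpose, hH]
      rw [Matrix.mul_assoc]
    · intro x hx
      rw [star_trivial]
      have h0 : (0:ℝ) ≤ x ⬝ᵥ x := Finset.sum_nonneg fun i _ => mul_self_nonneg (x i)
      have hs : 0 < x ⬝ᵥ x :=
        lt_of_le_of_ne h0 (Ne.symm (fun h => hx (dotProduct_self_eq_zero.mp h)))
      set s := x ⬝ᵥ x with hsdef
      have hsq : Real.sqrt s * Real.sqrt s = s := Real.mul_self_sqrt hs.le
      have hsqne : Real.sqrt s ≠ 0 := (Real.sqrt_pos.2 hs).ne'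
      set ξ : Fin n → ℝ := (Real.sqrt s)⁻¹ • (N *ᵥ x) with hξ
      have hAξ : A *ᵥ ξ = 0 := by
        rw [hξ, mulVec_smul, hANvec, smul_zero]
      have hξunit : ξ ⬝ᵥ ξ = 1 := by
        rw [hξ, smul_dotProduct, dotProduct_smul, hnorm, ← hsdef, smul_eq_mul, smul_eq_mul]
        field_simp
        rw [Real.sq_sqrt hs.le]
      have hmem : lammin ≤ ξ ⬝ᵥ (H *ᵥ ξ) := hmin.2 ⟨ξ, hAξ, hξunit, rfl⟩
      have hrel : (N *ᵥ x) ⬝ᵥ (H *ᵥ (N *ᵥ x)) = s * (ξ ⬝ᵥ (H *ᵥ ξ)) := by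
        rw [hξ, mulVec_smul, dotProduct_smul, smul_dotProduct, smul_eq_mul, smul_eq_mul]
        field_simp
        rw [Real.sq_sqrt hs.le]
      rw [hquad]
      rw [hrel, ← hsdef]
      nlinarith [hmem, hs, hlam]
  -- invertibility facts
  have hdetM : ∀ lam : ℝ, -lammin < lam → IsUnit (M lam).det := by
    intro lam hlam
    exact (Matrix.isUnit_iff_isUnit_det _).1 (hPD lam hlam).isUnit
  have hMinv : ∀ lam : ℝ, -lammin < lam → M lam * (M lam)⁻¹ = 1 := by
    intro lam hlam; exact Matrix.mul_nonsing_inv _ (hdetM lam hlam)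
  have hMinv' : ∀ lam : ℝ, -lammin < lam → (M lam)⁻¹ * M lam = 1 := by
    intro lam hlam; exact Matrix.nonsing_inv_mul _ (hdetM lam hlam)
  have hdetAA : IsUnit (A * Aᵀ).det := (Matrix.isUnit_iff_isUnit_det _).1 hfull.isUnit
  -- p in terms of the reduced solution
  have hpw : ∀ lam : ℝ, p lam = N *ᵥ (-((M lam)⁻¹ *ᵥ c)) := by
    intro lam
    rw [hp lam, hc]
    simp only [hM]
    rw [mulVec_neg, mulVec_mulVec, mulVec_mulVec]
  have hMw : ∀ lam : ℝ, -lammin < lam → M lam *ᵥ (-((M lam)⁻¹ *ᵥ c)) = -c := by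
    intro lam hlam
    rw [mulVec_neg, mulVec_mulVec, hMinv lam hlam, one_mulVec]
  -- reduced form of the big system
  have hred : ∀ (lam : ℝ) (u : Fin k → ℝ),
      Nᵀ *ᵥ ((H + lam • (1 : Matrix (Fin n) (Fin n) ℝ)) *ᵥ (N *ᵥ u)) = M lam *ᵥ u := by
    intro lam u
    rw [mulVec_mulVec, mulVec_mulVec]
    simp only [hM]
    have h6 : Nᵀ * (H + lam • (1 : Matrix (Fin n) (Fin n) ℝ)) * N =
        Nᵀ * H * N + lam • (1 : Matrix (Fin k) (Fin k) ℝ) := by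
      simp [Matrix.mul_add, Matrix.add_mul, Matrix.mul_smul, Matrix.smul_mul, hNN]
    rw [h6]
  have hNAT : ∀ q : Fin m → ℝ, Nᵀ *ᵥ (Aᵀ *ᵥ q) = 0 := by
    intro q
    rw [mulVec_mulVec, ← transpose_mul, hAN, transpose_zero, zero_mulVec]
  constructor
  · -- part 1
    intro lam hlam
    set w : Fin k → ℝ := -((M lam)⁻¹ *ᵥ c) with hw
    have hplam : p lam = N *ᵥ w := hpw lam
    -- the key uniqueness statement
    have key : ∀ pq : (Fin n → ℝ) × (Fin m → ℝ),
        (H + lam • (1 : Matrix (Fin n) (Fin n) ℝ)) *ᵥ pq.1 + Aᵀ *ᵥ pq.2 = -g →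
        A *ᵥ pq.1 = 0 → pq.1 = p lam := by
      rintro ⟨p', q'⟩ h1 h2
      obtain ⟨w', hw'⟩ := (hrange p').1 h2
      have h3 : M lam *ᵥ w' = -c := by
        have := congrArg (fun v => Nᵀ *ᵥ v) h1
        simp only [mulVec_add] at this
        rw [hw', hred lam w', hNAT, add_zero, mulVec_neg] at this
        exact this
      have h4 : w' = w := by
        have := congrArg (fun v => (M lam)⁻¹ *ᵥ v) h3
        rw [mulVec_mulVec, hMinv' lam hlam, one_mulVec, mulVec_neg] at this
        rw [this, hw]
      rw [hplam, hw', h4]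
    -- existence
    set v : Fin n → ℝ := -g - (H + lam • (1 : Matrix (Fin n) (Fin n) ℝ)) *ᵥ (N *ᵥ w) with hv
    set q₀ : Fin m → ℝ := ((A * Aᵀ)⁻¹ * A) *ᵥ v with hq₀
    have hNv : Nᵀ *ᵥ v = 0 := by
      rw [hv, mulVec_sub, hred lam w, mulVec_neg, hMw lam hlam, hc]
      simp
    have hATq : Aᵀ *ᵥ q₀ = v := by
      set r : Fin n → ℝ := v - Aᵀ *ᵥ q₀ with hr
      have hAr : A *ᵥ r = 0 := by
        have h7 : A * (Aᵀ * ((A * Aᵀ)⁻¹ * A)) = A := by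
          rw [← Matrix.mul_assoc A Aᵀ, ← Matrix.mul_assoc (A * Aᵀ),
            Matrix.mul_nonsing_inv _ hdetAA, Matrix.one_mul]
        rw [hr, mulVec_sub, hq₀]
        simp only [mulVec_mulVec]
        rw [h7, sub_self]
      obtain ⟨u, hu⟩ := (hrange r).1 hAr
      have hNr : Nᵀ *ᵥ r = 0 := by
        rw [hr, mulVec_sub, hNv, hNAT, sub_zero]
      rw [hu, hNTN] at hNr
      rw [hNr, mulVec_zero] at hu
      rw [hr] at hu
      exact (sub_eq_zero.mp hu).symm
    have heq1 : (H + lam • (1 : Matrix (Fin n) (Fin n) ℝ)) *ᵥ (N *ᵥ w) + Aᵀ *ᵥ q₀ = -g := by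
      rw [hATq, hv]
      abel
    refine ⟨⟨(N *ᵥ w, q₀), ⟨heq1, hANvec w⟩, ?_⟩, key⟩
    rintro ⟨p', q'⟩ ⟨h1', h2'⟩
    have hp'' : p' = N *ᵥ w := (key (p', q') h1' h2').trans hplam
    have hq' : Aᵀ *ᵥ q' = Aᵀ *ᵥ q₀ := by
      rw [hATq, hv]
      rw [hp'', add_comm] at h1'
      exact eq_sub_of_add_eq h1'
    have hqeq : q' = q₀ := by
      have hz : (A * Aᵀ) *ᵥ (q' - q₀) = 0 := by
        rw [← mulVec_mulVec, mulVec_sub, hq', sub_self, mulVec_zero]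
      have h5 := congrArg (fun u => (A * Aᵀ)⁻¹ *ᵥ u) hz
      rw [mulVec_mulVec, Matrix.nonsing_inv_mul _ hdetAA, one_mulVec, mulVec_zero] at h5
      exact sub_eq_zero.mp h5
    exact Prod.ext_iff.mpr ⟨hp'', hqeq⟩
  · -- part 2: monotonicity
    intro lam₁ lam₂ h1 h12
    have h2 : -lammin < lam₂ := lt_of_lt_of_le h1 h12
    set w₁ : Fin k → ℝ := -((M lam₁)⁻¹ *ᵥ c) with hw1
    set w₂ : Fin k → ℝ := -((M lam₂)⁻¹ *ᵥ c) with hw2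
    have e1 : M lam₁ *ᵥ w₁ = -c := hMw lam₁ h1
    have e2 : M lam₂ *ᵥ w₂ = -c := hMw lam₂ h2
    have hMdiff : ∀ u : Fin k → ℝ, M lam₂ *ᵥ u - M lam₁ *ᵥ u = (lam₂ - lam₁) • u := by
      intro u
      simp only [hM]
      simp only [add_mulVec, smul_mulVec, one_mulVec]
      rw [sub_smul]
      abel
    have hd1 : w₁ - w₂ = (lam₂ - lam₁) • ((M lam₂)⁻¹ *ᵥ w₁) := by
      have h : M lam₂ *ᵥ (w₁ - w₂) = (lam₂ - lam₁) • w₁ := by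
        rw [mulVec_sub, e2, ← hMdiff w₁, e1]
      have := congrArg (fun u => (M lam₂)⁻¹ *ᵥ u) h
      rw [mulVec_mulVec, hMinv' lam₂ h2, one_mulVec, mulVec_smul] at this
      exact this
    have hd2 : w₁ - w₂ = (lam₂ - lam₁) • ((M lam₁)⁻¹ *ᵥ w₂) := by
      have h : M lam₁ *ᵥ (w₁ - w₂) = (lam₂ - lam₁) • w₂ := by
        rw [mulVec_sub, e1, ← hMdiff w₂, e2]
      have := congrArg (fun u => (M lam₁)⁻¹ *ᵥ u) h
      rw [mulVec_mulVec, hMinv' lam₁ h1, one_mulVec, mulVec_smul] at this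
      exact this
    have hpsd1 : (0:ℝ) ≤ w₂ ⬝ᵥ ((M lam₁)⁻¹ *ᵥ w₂) := by
      have := (hPD lam₁ h1).inv.posSemidef.dotProduct_mulVec_nonneg w₂
      rwa [star_trivial] at this
    have hpsd2 : (0:ℝ) ≤ w₁ ⬝ᵥ ((M lam₂)⁻¹ *ᵥ w₁) := by
      have := (hPD lam₂ h2).inv.posSemidef.dotProduct_mulVec_nonneg w₁
      rwa [star_trivial] at this
    have hkey : w₂ ⬝ᵥ w₂ ≤ w₁ ⬝ᵥ w₁ := by
      have hsplit : w₁ ⬝ᵥ w₁ - w₂ ⬝ᵥ w₂ = (w₁ - w₂) ⬝ᵥ w₁ + w₂ ⬝ᵥ (w₁ - w₂) := by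
        rw [sub_dotProduct, dotProduct_sub]
        ring
      have t1 : (0:ℝ) ≤ (w₁ - w₂) ⬝ᵥ w₁ := by
        rw [hd1, smul_dotProduct, smul_eq_mul, dotProduct_comm]
        exact mul_nonneg (by linarith) hpsd2
      have t2 : (0:ℝ) ≤ w₂ ⬝ᵥ (w₁ - w₂) := by
        rw [hd2, dotProduct_smul, smul_eq_mul]
        exact mul_nonneg (by linarith) hpsd1
      linarith [hsplit]
    rw [hpw lam₁, hpw lam₂, hnorm, hnorm]
    exact Real.sqrt_le_sqrt hkey
end

section
/- Define M = {U ∈ R^{n×r} : U U^T 1_n = 1_n, tr(U U^T) = K}, V = {V ∈ R^{n×(r-1)} : 1_n^T V = 0, tr(V V^T) = K - 1}, O(r) = {Q ∈ R^{r×r} : Q Q^T = I_r}, and φ(V,Q) = [n^{-1/2} 1_n, V] Q. Then M = φ(V × O(r)), i.e., every U ∈ M can be written as φ(V,Q) for some (V,Q) ∈ V × O(r), and conversely every such φ(V,Q) lies in M. -/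
open Matrix

lemma cons_trace_aux (n r : ℕ) (c : ℝ) (V : Matrix (Fin n) (Fin r) ℝ) :
    ((Matrix.of fun i => Fin.cons c (fun j => V i j)) *
      (Matrix.of fun i => Fin.cons c (fun j => V i j))ᵀ).trace
      = n * (c * c) + (V * Vᵀ).trace := by
  simp only [Matrix.trace, Matrix.diag, Matrix.mul_apply, Matrix.transpose_apply,
    Matrix.of_apply, Fin.sum_univ_succ, Fin.cons_zero, Fin.cons_succ]
  rw [Finset.sum_add_distrib, Finset.sum_const, Finset.card_univ, Fintype.card_fin,
    nsmul_eq_mul]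

/-- The K-means manifold `M` equals the image `φ(V × O(r))` of the product manifold,
where `φ(V,Q) = [n^{-1/2} 1ₙ, V] Q`.  Here the search rank is written as `r + 1 ≥ 1`. -/
theorem stmt_2 (n r K : ℕ) (hn : 0 < n) (hK : 1 ≤ K) :
    {U : Matrix (Fin n) (Fin (r + 1)) ℝ |
        (U * Uᵀ).mulVec (fun _ => (1 : ℝ)) = (fun _ => (1 : ℝ)) ∧
        (U * Uᵀ).trace = (K : ℝ)} =
      (fun p : Matrix (Fin n) (Fin r) ℝ × Matrix (Fin (r + 1)) (Fin (r + 1)) ℝ =>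
          (Matrix.of fun i => Fin.cons ((Real.sqrt n)⁻¹) (fun j => p.1 i j)) * p.2) ''
        {p : Matrix (Fin n) (Fin r) ℝ × Matrix (Fin (r + 1)) (Fin (r + 1)) ℝ |
          (fun _ => (1 : ℝ)) ᵥ* p.1 = 0 ∧
          (p.1 * p.1ᵀ).trace = (K : ℝ) - 1 ∧
          p.2 * p.2ᵀ = 1} := by
  have hn0 : (0:ℝ) < (n:ℝ) := by exact_mod_cast hn
  have hsn : Real.sqrt n ≠ 0 := by positivity
  have hsn2 : Real.sqrt n * Real.sqrt n = (n:ℝ) := Real.mul_self_sqrt hn0.le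
  have hinv : (Real.sqrt n)⁻¹ * (Real.sqrt n)⁻¹ = ((n:ℝ))⁻¹ := by
    rw [← mul_inv, hsn2]
  ext U
  constructor
  · rintro ⟨h1, h2⟩
    set w : Fin n → ℝ := fun _ => (1:ℝ) with hw
    set y : Fin (r+1) → ℝ := w ᵥ* U with hy
    have hUy : U.mulVec y = w := by
      have := h1
      rwa [show U * Uᵀ = U * Uᵀ from rfl, ← Matrix.mulVec_mulVec,
        Matrix.mulVec_transpose, ← hy] at this
    have hyy : y ⬝ᵥ y = (n:ℝ) := by
      have : y ⬝ᵥ y = w ⬝ᵥ U.mulVec y := by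
        rw [Matrix.dotProduct_mulVec, ← hy]
      rw [this, hUy]
      simp [hw, dotProduct]
    set x : EuclideanSpace ℝ (Fin (r+1)) := WithLp.toLp 2 (fun k => (Real.sqrt n)⁻¹ * y k) with hx
    have hxx : ∑ k, x k * x k = 1 := by
      have : ∑ k, x k * x k = ((Real.sqrt n)⁻¹ * (Real.sqrt n)⁻¹) * ∑ k, y k * y k := by
        rw [Finset.mul_sum]; apply Finset.sum_congr rfl; intro k _; rw [hx]; ring
      rw [this, hinv]
      have : ∑ k, y k * y k = y ⬝ᵥ y := rfl
      rw [this, hyy, inv_mul_cancel₀ hn0.ne']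
    have horth : Orthonormal ℝ (({0} : Set (Fin (r+1))).restrict (fun _ => x)) := by
      rw [orthonormal_iff_ite]
      rintro ⟨i, hi⟩ ⟨j, hj⟩
      simp only [Set.mem_singleton_iff] at hi hj
      subst hi; subst hj
      simp only [Set.restrict_apply, if_true]
      simp only [PiLp.inner_apply, RCLike.inner_apply, starRingEnd_apply, star_trivial]
      exact hxx
    obtain ⟨b, hb⟩ := horth.exists_orthonormalBasis_extension_of_card_eq
      (by simp) 
    have hb0 : b 0 = x := hb 0 rfl
    set Q : Matrix (Fin (r+1)) (Fin (r+1)) ℝ := Matrix.of fun i j => b i j with hQdef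
    have hbij : ∀ i j : Fin (r+1), (inner ℝ (b i) (b j) : ℝ) = ∑ k, b i k * b j k := by
      intro i j
      simp [PiLp.inner_apply, RCLike.inner_apply, starRingEnd_apply, mul_comm]
    have hQQ : Q * Qᵀ = 1 := by
      ext i j
      rw [Matrix.mul_apply, Matrix.one_apply]
      have := (orthonormal_iff_ite).mp b.orthonormal i j
      rw [hbij] at this
      simpa [hQdef] using this
    have hQtQ : Qᵀ * Q = 1 := mul_eq_one_comm.mp hQQ
    have hUQ0 : ∀ i, (U * Qᵀ) i 0 = (Real.sqrt n)⁻¹ := by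
      intro i
      have : (U * Qᵀ) i 0 = ∑ k, U i k * x k := by
        simp [Matrix.mul_apply, hQdef, hb0]
      rw [this]
      have : ∑ k, U i k * x k = (Real.sqrt n)⁻¹ * (U.mulVec y) i := by
        rw [Matrix.mulVec, dotProduct, Finset.mul_sum]
        apply Finset.sum_congr rfl; intro k _; rw [hx]; ring
      rw [this, hUy]
      simp [hw]
    set V : Matrix (Fin n) (Fin r) ℝ := Matrix.of fun i j => (U * Qᵀ) i j.succ with hVdef
    have hA : (Matrix.of fun i => Fin.cons ((Real.sqrt n)⁻¹) (fun j => V i j)) = U * Qᵀ := by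
      ext i j
      refine Fin.cases ?_ ?_ j
      · simp [hUQ0 i]
      · intro j'; simp [hVdef]
    refine ⟨⟨V, Q⟩, ⟨?_, ?_, hQQ⟩, ?_⟩
    · -- 1ᵥ* V = 0
      funext j
      show (w ᵥ* V) j = 0
      have hyx : ∀ k, y k = Real.sqrt n * x k := by
        intro k; rw [hx]; field_simp
      have h0 : (inner ℝ (b 0) (b j.succ) : ℝ) = 0 := by
        rw [orthonormal_iff_ite.mp b.orthonormal 0 j.succ,
          if_neg (Fin.succ_ne_zero j).symm]
      rw [hbij, hb0] at h0
      have e1 : (w ᵥ* V) j = ∑ k, y k * b j.succ k := by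
        simp only [Matrix.vecMul, dotProduct, hVdef, Matrix.of_apply,
          Matrix.mul_apply, hw, one_mul, hy]
        rw [Finset.sum_comm]
        apply Finset.sum_congr rfl; intro k _
        simp only [Matrix.vecMul, dotProduct, Matrix.transpose_apply, hQdef,
          Matrix.of_apply, hw, one_mul, Finset.sum_mul]
      have e2 : ∑ k, y k * b j.succ k = Real.sqrt n * ∑ k, x k * b j.succ k := by
        rw [Finset.mul_sum]; apply Finset.sum_congr rfl; intro k _; rw [hyx]; ring
      rw [e1, e2, h0, mul_zero]
    · -- trace
      have hUU : U * Uᵀ = (U * Qᵀ) * (U * Qᵀ)ᵀ := by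
        rw [Matrix.transpose_mul, Matrix.transpose_transpose]
        rw [show U * Qᵀ * (Q * Uᵀ) = U * (Qᵀ * Q) * Uᵀ by
          simp only [Matrix.mul_assoc], hQtQ, Matrix.mul_one]
      have := cons_trace_aux n r ((Real.sqrt n)⁻¹) V
      rw [hA, ← hUU, h2, hinv, mul_inv_cancel₀ hn0.ne'] at this
      linarith
    · -- U = A * Q
      show (Matrix.of fun i => Fin.cons ((Real.sqrt n)⁻¹) (fun j => V i j)) * Q = U
      rw [hA, Matrix.mul_assoc, hQtQ, Matrix.mul_one]
  · rintro ⟨⟨V, Q⟩, ⟨hV1, hV2, hQQ⟩, rfl⟩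
    set A : Matrix (Fin n) (Fin (r+1)) ℝ :=
      Matrix.of fun i => Fin.cons ((Real.sqrt n)⁻¹) (fun j => V i j) with hAdef
    have hUU : (A * Q) * (A * Q)ᵀ = A * Aᵀ := by
      rw [Matrix.transpose_mul]
      rw [show A * Q * (Qᵀ * Aᵀ) = A * (Q * Qᵀ) * Aᵀ by simp only [Matrix.mul_assoc],
        hQQ, Matrix.mul_one]
    constructor
    · show ((A * Q) * (A * Q)ᵀ).mulVec _ = _
      rw [hUU]
      funext i
      have hAA : ∀ i', (A * Aᵀ) i i' = ((n:ℝ))⁻¹ + ∑ j, V i j * V i' j := by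
        intro i'
        simp only [Matrix.mul_apply, Matrix.transpose_apply, hAdef, Matrix.of_apply,
          Fin.sum_univ_succ, Fin.cons_zero, Fin.cons_succ, hinv]
      simp only [Matrix.mulVec, dotProduct, mul_one]
      rw [Finset.sum_congr rfl (fun i' _ => hAA i'), Finset.sum_add_distrib,
        Finset.sum_const, Finset.card_univ, Fintype.card_fin, nsmul_eq_mul,
        mul_inv_cancel₀ hn0.ne']
      have : ∑ i', ∑ j, V i j * V i' j = ∑ j, V i j * (∑ i', V i' j) := by
        rw [Finset.sum_comm]
        apply Finset.sum_congr rfl; intro j _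
        rw [Finset.mul_sum]
      rw [this]
      have hz : ∀ j, ∑ i', V i' j = 0 := by
        intro j
        have := congrFun hV1 j
        simpa [Matrix.vecMul, dotProduct] using this
      simp [hz]
    · show ((A * Q) * (A * Q)ᵀ).trace = _
      rw [hUU, hAdef, cons_trace_aux, hinv, mul_inv_cancel₀ hn0.ne', hV2]
      ring
end

section
/- Let M_+ = {U ∈ R^{n×K} : U ≥ 0 entrywise, U U^T 1_n = 1_n, tr(U U^T) = K} and M'_+ = {U ∈ R^{n×K} : U ≥ 0, U U^T 1_n = 1_n, U^T U = I_K}. Then M_+ = M'_+. That is, for entrywise nonnegative U with U U^T 1_n = 1_n, the conditions tr(U U^T) = K and U^T U = I_K are equivalent. -/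
open Matrix

/-- If `S` has nonnegative entries, is symmetric, and all its row sums are `1`,
then `1 - S` is positive semidefinite. -/
lemma aux_one_sub_posSemidef {n : ℕ} (S : Matrix (Fin n) (Fin n) ℝ)
    (hsym : Sᵀ = S) (hpos : ∀ i j, 0 ≤ S i j) (hrow : ∀ i, ∑ j, S i j = 1) :
    (1 - S).PosSemidef := by
  rw [posSemidef_iff_dotProduct_mulVec]
  constructor
  · unfold Matrix.IsHermitian
    rw [conjTranspose_eq_transpose_of_trivial, transpose_sub, transpose_one, hsym]
  · intro x
    have hstar : star x = x := by simp
    rw [hstar]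
    have hxx : dotProduct x ((1 - S) *ᵥ x)
        = ∑ i, x i * x i - ∑ i, ∑ j, x i * (S i j * x j) := by
      rw [sub_mulVec, dotProduct_sub, one_mulVec]
      congr 1
      simp [dotProduct, mulVec, Finset.mul_sum]
    rw [hxx, sub_nonneg]
    have hSS : ∀ i j, S i j = S j i := by
      intro i j
      conv_lhs => rw [← hsym]
      rfl
    have key : ∀ i j, x i * (S i j * x j) ≤ S i j * ((x i)^2 + (x j)^2) / 2 := by
      intro i j
      nlinarith [hpos i j, sq_nonneg (x i - x j), sq_nonneg (x i + x j)]
    calc ∑ i, ∑ j, x i * (S i j * x j)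
        ≤ ∑ i, ∑ j, S i j * ((x i)^2 + (x j)^2) / 2 := by
          apply Finset.sum_le_sum; intro i _
          exact Finset.sum_le_sum fun j _ => key i j
      _ = ∑ i, x i * x i := by
          have hcol : ∀ j, ∑ i, S i j = 1 := by
            intro j
            rw [← hrow j]
            exact Finset.sum_congr rfl fun i _ => hSS i j
          have expand : ∀ i j, S i j * ((x i)^2 + (x j)^2) / 2
              = S i j * (x i)^2 / 2 + S i j * (x j)^2 / 2 := by intro i j; ring
          simp_rw [expand, Finset.sum_add_distrib]
          rw [Finset.sum_comm (f := fun i j => S i j * (x j)^2 / 2)]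
          have h1 : ∑ i, ∑ j, S i j * (x i)^2 / 2 = ∑ i, (x i)^2 / 2 := by
            apply Finset.sum_congr rfl; intro i _
            rw [← Finset.sum_div, ← Finset.sum_mul, hrow i, one_mul]
          have h2 : ∑ j, ∑ i, S i j * (x j)^2 / 2 = ∑ j, (x j)^2 / 2 := by
            apply Finset.sum_congr rfl; intro j _
            rw [← Finset.sum_div, ← Finset.sum_mul, hcol j, one_mul]
          rw [h1, h2, ← Finset.sum_add_distrib]
          apply Finset.sum_congr rfl; intro i _; ring

/-- `M₊ = M'₊`: for entrywise nonnegative `U` with `UUᵀ1 = 1`, the conditions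
`tr(UUᵀ) = K` and `UᵀU = I_K` are equivalent. -/
theorem stmt_7 (n K : ℕ) (hK : 1 ≤ K) (hn : K ≤ n) :
    {U : Matrix (Fin n) (Fin K) ℝ | (∀ i j, 0 ≤ U i j) ∧
        (U * Uᵀ).mulVec (fun _ => (1 : ℝ)) = (fun _ => (1 : ℝ)) ∧
        (U * Uᵀ).trace = (K : ℝ)} =
      {U : Matrix (Fin n) (Fin K) ℝ | (∀ i j, 0 ≤ U i j) ∧
        (U * Uᵀ).mulVec (fun _ => (1 : ℝ)) = (fun _ => (1 : ℝ)) ∧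
        Uᵀ * U = 1} := by
  ext U
  simp only [Set.mem_setOf_eq]
  refine ⟨fun ⟨hU, h1, htr⟩ => ⟨hU, h1, ?_⟩, fun ⟨hU, h1, horth⟩ => ⟨hU, h1, ?_⟩⟩
  · -- hard direction: trace = K → UᵀU = 1
    set S := U * Uᵀ with hSdef
    have hSsym : Sᵀ = S := by rw [hSdef, transpose_mul, transpose_transpose]
    have hSpos : ∀ i j, 0 ≤ S i j := by
      intro i j
      rw [hSdef, mul_apply]
      exact Finset.sum_nonneg fun k _ => mul_nonneg (hU i k) (hU j k)
    have hrow : ∀ i, ∑ j, S i j = 1 := by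
      intro i
      have := congrFun h1 i
      simpa [mulVec, dotProduct] using this
    have hPS : (1 - S).PosSemidef := aux_one_sub_posSemidef S hSsym hSpos hrow
    set A := Uᵀ * U with hAdef
    have hAsym : A.IsHermitian := by
      unfold Matrix.IsHermitian
      rw [conjTranspose_eq_transpose_of_trivial, hAdef, transpose_mul, transpose_transpose]
    have hdiff : (A - A * A).PosSemidef := by
      have h := hPS.conjTranspose_mul_mul_same U
      have heq : Uᴴ * (1 - S) * U = A - A * A := by
        rw [conjTranspose_eq_transpose_of_trivial, Matrix.mul_sub, Matrix.mul_one,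
          Matrix.sub_mul, hSdef, hAdef]
        congr 1
        simp only [Matrix.mul_assoc]
      rwa [heq] at h
    have htrA : A.trace = (K : ℝ) := by
      rw [hAdef, trace_mul_comm, ← hSdef, htr]
    clear_value A
    clear_value S
    set lam := hAsym.eigenvalues with hlam
    have hsum : ∑ i, lam i = (K : ℝ) := by
      have h := congrArg Matrix.trace hAsym.spectral_theorem
      rw [Unitary.conjStarAlgAut_apply, trace_mul_comm, ← Matrix.mul_assoc,
        (mem_unitaryGroup_iff'.mp (hAsym.eigenvectorUnitary).2), one_mul, htrA] at h
      rw [← hlam] at h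
      simpa [Matrix.trace, Matrix.diag, diagonal] using h.symm
    have hle : ∀ i, lam i ≤ 1 := by
      intro i
      have hAv : A *ᵥ ⇑(hAsym.eigenvectorBasis i)
          = lam i • ⇑(hAsym.eigenvectorBasis i) := hAsym.mulVec_eigenvectorBasis i
      set v : Fin K → ℝ := ⇑(hAsym.eigenvectorBasis i) with hv
      have hAAv : (A - A * A) *ᵥ v = (lam i - lam i * lam i) • v := by
        rw [sub_mulVec, ← mulVec_mulVec, hAv, mulVec_smul, hAv, smul_smul, ← sub_smul]
      have hvv : dotProduct v v = 1 := by
        have hnorm := hAsym.eigenvectorBasis.orthonormal.1 i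
        have hinner : (inner ℝ (hAsym.eigenvectorBasis i) (hAsym.eigenvectorBasis i) : ℝ) = 1 := by
          rw [real_inner_self_eq_norm_mul_norm, hnorm, one_mul]
        rw [PiLp.inner_apply] at hinner
        simpa [dotProduct, hv, pow_two] using hinner
      have hq := hdiff.dotProduct_mulVec_nonneg v
      rw [hAAv, show star v = v from by simp, dotProduct_smul, smul_eq_mul, hvv, mul_one] at hq
      nlinarith
    have hall : ∀ i, lam i = 1 := by
      have hzero : ∑ i : Fin K, (1 - lam i) = 0 := by
        rw [Finset.sum_sub_distrib, hsum]
        simp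
      intro i
      have := (Finset.sum_eq_zero_iff_of_nonneg (fun j _ => by linarith [hle j])).mp hzero i
        (Finset.mem_univ i)
      linarith
    have hst := hAsym.spectral_theorem
    rw [← hlam] at hst
    rw [show (RCLike.ofReal ∘ lam : Fin K → ℝ) = fun _ => 1 from funext fun i => by
          simp [hall i], diagonal_one, Unitary.conjStarAlgAut_apply, Matrix.mul_one,
      (mem_unitaryGroup_iff.mp (hAsym.eigenvectorUnitary).2)] at hst
    exact hst
  · rw [trace_mul_comm, horth, trace_one]
    simp
end

section
/- Let U ∈ R^{n×K} satisfy U ≥ 0 entrywise, U U^T 1_n = 1_n, and U^T U = I_K. Then there exists a partition G_1 ⊔ ⋯ ⊔ G_K = [n] into nonempty sets such that the k-th column of U equals |G_k|^{-1/2} 1_{G_k} (the indicator vector of G_k scaled by |G_k|^{-1/2}). Conversely, for any such partition, the matrix with these columns lies in M_+. -/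
open Matrix

/-- Nonnegative `U` with `UUᵀ1 = 1` and `UᵀU = I` are exactly the normalized group
assignment matrices of partitions of `[n]` into `K` nonempty groups. -/
theorem stmt_8 (n K : ℕ) (hK : 1 ≤ K) (hn : K ≤ n) :
    (∀ U : Matrix (Fin n) (Fin K) ℝ,
      (∀ i j, 0 ≤ U i j) →
      (U * Uᵀ).mulVec (fun _ => (1 : ℝ)) = (fun _ => (1 : ℝ)) →
      Uᵀ * U = 1 →
      ∃ G : Fin K → Finset (Fin n),
        (∀ k l, k ≠ l → Disjoint (G k) (G l)) ∧
        (∀ i : Fin n, ∃ k, i ∈ G k) ∧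
        (∀ k, (G k).Nonempty) ∧
        (∀ i k, U i k = if i ∈ G k then (Real.sqrt ((G k).card : ℝ))⁻¹ else 0)) ∧
    (∀ G : Fin K → Finset (Fin n),
      (∀ k l, k ≠ l → Disjoint (G k) (G l)) →
      (∀ i : Fin n, ∃ k, i ∈ G k) →
      (∀ k, (G k).Nonempty) →
      ∀ U : Matrix (Fin n) (Fin K) ℝ,
        (U = fun i k => if i ∈ G k then (Real.sqrt ((G k).card : ℝ))⁻¹ else 0) →
        (∀ i j, 0 ≤ U i j) ∧
        (U * Uᵀ).mulVec (fun _ => (1 : ℝ)) = (fun _ => (1 : ℝ)) ∧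
        Uᵀ * U = 1) := by
  constructor
  · -- Forward direction
    intro U hpos h1 horth
    set s : Fin K → ℝ := fun k => ∑ j, U j k with hs
    -- column norms are 1
    have hnorm : ∀ k, ∑ i, U i k ^ 2 = 1 := by
      intro k
      have h := congrFun (congrFun horth k) k
      simpa [Matrix.mul_apply, Matrix.one_apply, sq] using h
    -- columns have disjoint supports
    have hortho : ∀ k l, k ≠ l → ∀ i, U i k * U i l = 0 := by
      intro k l hkl i
      have h0 : ∑ i, U i k * U i l = 0 := by
        have h := congrFun (congrFun horth k) l
        simpa [Matrix.mul_apply, Matrix.one_apply, hkl] using h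
      exact (Finset.sum_eq_zero_iff_of_nonneg
        (fun i _ => mul_nonneg (hpos i k) (hpos i l))).mp h0 i (Finset.mem_univ i)
    -- row equation : ∑ k, U i k * s k = 1
    have hrow : ∀ i, ∑ k, U i k * s k = 1 := by
      intro i
      have h := congrFun h1 i
      simp only [Matrix.mulVec, dotProduct, Matrix.mul_apply, Matrix.transpose_apply,
        mul_one] at h
      calc ∑ k, U i k * s k = ∑ k, ∑ j, U i k * U j k := by
            simp [hs, Finset.mul_sum]
        _ = ∑ j, ∑ k, U i k * U j k := Finset.sum_comm
        _ = 1 := h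
    -- column sums are positive
    have hspos : ∀ k, 0 < s k := by
      intro k
      obtain ⟨i, hi⟩ : ∃ i, U i k ≠ 0 := by
        by_contra h
        push_neg at h
        have := hnorm k
        simp [h] at this
      have hipos : 0 < U i k := lt_of_le_of_ne (hpos i k) (Ne.symm hi)
      have : U i k ≤ s k :=
        Finset.single_le_sum (fun j _ => hpos j k) (Finset.mem_univ i)
      linarith
    -- on the support of column k, U i k = (s k)⁻¹
    have hval : ∀ i k, U i k ≠ 0 → U i k = (s k)⁻¹ := by
      intro i k hik
      have hone : U i k * s k = 1 := by
        have := hrow i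
        rw [Finset.sum_eq_single k] at this
        · exact this
        · intro l _ hlk
          have h0 : U i l * U i k = 0 := hortho l k hlk i
          have : U i l = 0 := by
            rcases mul_eq_zero.mp h0 with h | h
            · exact h
            · exact absurd h hik
          simp [this]
        · intro h; exact absurd (Finset.mem_univ k) h
      exact eq_inv_of_mul_eq_one_left hone
    refine ⟨fun k => Finset.univ.filter (fun i => U i k ≠ 0), ?_, ?_, ?_, ?_⟩
    · -- disjoint
      intro k l hkl
      rw [Finset.disjoint_left]
      intro i hik hil
      simp only [Finset.mem_filter] at hik hil
      exact hik.2 (by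
        rcases mul_eq_zero.mp (hortho k l hkl i) with h | h
        · exact h
        · exact absurd h hil.2)
    · -- cover
      intro i
      by_contra h
      push_neg at h
      have hz : ∀ k, U i k = 0 := by
        intro k
        have := h k
        simp only [Finset.mem_filter, Finset.mem_univ, true_and, not_not] at this
        exact this
      have := hrow i
      simp [hz] at this
    · -- nonempty
      intro k
      obtain ⟨i, hi⟩ : ∃ i, U i k ≠ 0 := by
        by_contra h
        push_neg at h
        have := hnorm k
        simp [h] at this
      exact ⟨i, by simp [hi]⟩
    · -- values
      intro i k
      have hcard : ((Finset.univ.filter (fun i => U i k ≠ 0)).card : ℝ) = s k ^ 2 := by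
        have h1' : ∑ i ∈ Finset.univ.filter (fun i => U i k ≠ 0), U i k ^ 2 = 1 := by
          rw [Finset.sum_filter_of_ne]
          · exact hnorm k
          · intro x _ hx
            intro h0
            exact hx (by simp [h0])
        have h2' : ∑ i ∈ Finset.univ.filter (fun i => U i k ≠ 0), U i k ^ 2 =
            ((Finset.univ.filter (fun i => U i k ≠ 0)).card : ℝ) * ((s k)⁻¹) ^ 2 := by
          rw [Finset.sum_congr rfl (fun x hx => ?_)]
          · rw [Finset.sum_const, nsmul_eq_mul]
          · simp only [Finset.mem_filter] at hx
            rw [hval x k hx.2]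
        have hsne : s k ≠ 0 := ne_of_gt (hspos k)
        have := h1'.symm.trans h2'
        field_simp at this
        linarith
      have hsqrt : Real.sqrt ((Finset.univ.filter (fun i => U i k ≠ 0)).card : ℝ) = s k := by
        rw [hcard, Real.sqrt_sq (le_of_lt (hspos k))]
      by_cases hik : U i k ≠ 0
      · simp only [Finset.mem_filter, Finset.mem_univ, true_and]
        rw [if_pos hik, hsqrt]
        exact hval i k hik
      · push_neg at hik
        simp [hik]
  · -- Converse direction
    intro G hdisj hcover hne U hU
    subst hU
    have hcpos : ∀ k, (0:ℝ) < ((G k).card : ℝ) := by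
      intro k
      exact_mod_cast Finset.card_pos.mpr (hne k)
    have hsqrtpos : ∀ k, (0:ℝ) < Real.sqrt ((G k).card : ℝ) := fun k =>
      Real.sqrt_pos.mpr (hcpos k)
    refine ⟨?_, ?_, ?_⟩
    · intro i k
      dsimp only
      split
      · exact le_of_lt (inv_pos.mpr (hsqrtpos k))
      · exact le_refl 0
    · funext i
      change ((Matrix.of fun i k => if i ∈ G k then (Real.sqrt ((G k).card : ℝ))⁻¹ else 0) * (Matrix.of fun i k => if i ∈ G k then (Real.sqrt ((G k).card : ℝ))⁻¹ else 0)ᵀ).mulVec _ i = _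
      simp only [Matrix.mulVec, dotProduct, Matrix.mul_apply, Matrix.transpose_apply,
        mul_one, Matrix.of_apply]
      rw [Finset.sum_comm]
      obtain ⟨k₀, hk₀⟩ := hcover i
      have hterm : ∀ k, (∑ j, (if i ∈ G k then (Real.sqrt ((G k).card : ℝ))⁻¹ else 0) *
          (if j ∈ G k then (Real.sqrt ((G k).card : ℝ))⁻¹ else 0)) =
          if i ∈ G k then 1 else 0 := by
        intro k
        rw [← Finset.mul_sum]
        have hsum : (∑ j, (if j ∈ G k then (Real.sqrt ((G k).card : ℝ))⁻¹ else 0)) =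
            Real.sqrt ((G k).card : ℝ) := by
          rw [Finset.sum_ite_mem, Finset.univ_inter, Finset.sum_const, nsmul_eq_mul]
          rw [show ((G k).card : ℝ) = Real.sqrt ((G k).card : ℝ) * Real.sqrt ((G k).card : ℝ)
            from (Real.mul_self_sqrt (le_of_lt (hcpos k))).symm]
          rw [Real.sqrt_mul_self (Real.sqrt_nonneg _), mul_assoc,
            mul_inv_cancel₀ (ne_of_gt (hsqrtpos k)), mul_one]
        rw [hsum]
        split
        · exact inv_mul_cancel₀ (ne_of_gt (hsqrtpos _))
        · exact zero_mul _
      rw [Finset.sum_congr rfl (fun k _ => hterm k)]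
      rw [Finset.sum_eq_single k₀]
      · simp [hk₀]
      · intro l _ hlk
        have : i ∉ G l := Finset.disjoint_left.mp (hdisj k₀ l (Ne.symm hlk)) hk₀
        simp [this]
      · intro h; exact absurd (Finset.mem_univ k₀) h
    · funext k l
      change ((Matrix.of fun i k => if i ∈ G k then (Real.sqrt ((G k).card : ℝ))⁻¹ else 0)ᵀ * (Matrix.of fun i k => if i ∈ G k then (Real.sqrt ((G k).card : ℝ))⁻¹ else 0)) k l = _
      simp only [Matrix.mul_apply, Matrix.transpose_apply, Matrix.of_apply]
      by_cases hkl : k = l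
      · subst hkl
        simp only [Matrix.one_apply_eq]
        have : ∀ i, (if i ∈ G k then (Real.sqrt ((G k).card : ℝ))⁻¹ else 0) *
            (if i ∈ G k then (Real.sqrt ((G k).card : ℝ))⁻¹ else 0) =
            if i ∈ G k then (((G k).card : ℝ))⁻¹ else 0 := by
          intro i
          split
          · rw [← mul_inv, Real.mul_self_sqrt (le_of_lt (hcpos k))]
          · ring
        rw [Finset.sum_congr rfl (fun i _ => this i)]
        rw [Finset.sum_ite_mem, Finset.univ_inter, Finset.sum_const, nsmul_eq_mul]
        exact mul_inv_cancel₀ (ne_of_gt (hcpos k))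
      · rw [Matrix.one_apply_ne hkl]
        apply Finset.sum_eq_zero
        intro i _
        by_cases hik : i ∈ G k
        · have : i ∉ G l := Finset.disjoint_left.mp (hdisj k l hkl) hik
          simp [this]
        · simp [hik]
end

section
/- Let U ∈ R^{n×K} be a group assignment matrix, i.e., U has columns |G_k|^{-1/2} 1_{G_k} for a partition G_1 ⊔ ⋯ ⊔ G_K = [n] with all G_k nonempty, and let T_U M = {V ∈ R^{n×K} : (U V^T + V U^T) 1_n = 0, ⟨U, V⟩ = 0} and C_U = {V ∈ R^{n×K} : V_{ij} ≥ 0 whenever U_{ij} = 0}. Then T_U M ∩ C_U = {0}. -/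
open Matrix

/-- At a group assignment matrix `U`, the tangent space of the K-means manifold
intersects the cone `C_U = {V : V_{ij} ≥ 0 whenever U_{ij} = 0}` trivially. -/
theorem stmt_11 (n K : ℕ) (hK : 2 ≤ K) (hn : K ≤ n)
    (G : Fin K → Finset (Fin n))
    (hdisj : ∀ k l, k ≠ l → Disjoint (G k) (G l))
    (hcover : ∀ i : Fin n, ∃ k, i ∈ G k)
    (hne : ∀ k, (G k).Nonempty)
    (U : Matrix (Fin n) (Fin K) ℝ)
    (hU : U = fun i k => if i ∈ G k then (Real.sqrt ((G k).card : ℝ))⁻¹ else 0)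
    (V : Matrix (Fin n) (Fin K) ℝ)
    (htan1 : (U * Vᵀ + V * Uᵀ).mulVec (fun _ => (1 : ℝ)) = 0)
    (htan2 : (Uᵀ * V).trace = 0)
    (hcone : ∀ i k, U i k = 0 → 0 ≤ V i k) :
    V = 0 := by
  classical
  set c : Fin K → ℝ := fun k => ((G k).card : ℝ) with hc
  set r : Fin K → ℝ := fun k => Real.sqrt (c k) with hr
  have hcpos : ∀ k, 0 < c k := fun k => by
    have h0 : (0:ℝ) < ((G k).card : ℝ) := by exact_mod_cast Finset.card_pos.mpr (hne k)
    exact h0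
  have hrpos : ∀ k, 0 < r k := fun k => Real.sqrt_pos.mpr (hcpos k)
  have hrr : ∀ k, r k * r k = c k := fun k => Real.mul_self_sqrt (hcpos k).le
  have hmemu : ∀ {i k l}, i ∈ G k → i ∈ G l → k = l := by
    intro i k l hk hl
    by_contra h
    exact (hdisj k l h).forall_ne_finset hk hl rfl
  have hUval : ∀ i k, i ∈ G k → U i k = (r k)⁻¹ := by
    intro i k h; simp [hU, h, hr, hc]
  have hUzero : ∀ i k, i ∉ G k → U i k = 0 := by
    intro i k h; simp [hU, h]
  have hVnn : ∀ i k, i ∉ G k → 0 ≤ V i k := fun i k h => hcone i k (hUzero i k h)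
  set s : Fin K → ℝ := fun k => ∑ j, V j k with hs
  set a : Fin K → ℝ := fun k => ∑ i ∈ G k, V i k with ha
  set b : Fin K → ℝ := fun k => ∑ i ∈ (G k)ᶜ, V i k with hb
  have hbnn : ∀ k, 0 ≤ b k := by
    intro k
    exact Finset.sum_nonneg fun i hi => hVnn i k (Finset.mem_compl.mp hi)
  have hsab : ∀ k, s k = a k + b k := by
    intro k
    rw [hs, ha, hb]
    exact (Finset.sum_add_sum_compl (G k) _).symm
  -- column sums of U
  have hUcol : ∀ k, ∑ j, U j k = r k := by
    intro k
    have : ∀ j, U j k = if j ∈ G k then (r k)⁻¹ else 0 := by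
      intro j; by_cases h : j ∈ G k <;> simp [hUval, hUzero, h]
    rw [Finset.sum_congr rfl fun j _ => this j, Finset.sum_ite_mem,
      Finset.univ_inter, Finset.sum_const, nsmul_eq_mul]
    have h2 := hrr k
    have h3 := (hrpos k).ne'
    field_simp
    linarith [h2]
  -- row equation
  have hrow : ∀ l i, i ∈ G l → (r l)⁻¹ * s l + ∑ k, r k * V i k = 0 := by
    intro l i hi
    have h0 := congrFun htan1 i
    simp only [add_mulVec, Pi.add_apply, Pi.zero_apply, mulVec, dotProduct,
      Matrix.add_apply, Matrix.mul_apply, Matrix.transpose_apply, mul_one] at h0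
    rw [Finset.sum_add_distrib] at h0
    have h1 : ∑ j, ∑ k, U i k * V j k = (r l)⁻¹ * s l := by
      rw [Finset.sum_comm]
      have : ∀ k, ∑ j, U i k * V j k = if k = l then (r l)⁻¹ * s l else 0 := by
        intro k
        by_cases hk : k = l
        · subst hk; rw [← Finset.mul_sum, hUval i k hi]; simp [hs]
        · have : i ∉ G k := fun h => hk (hmemu h hi)
          rw [← Finset.mul_sum, hUzero i k this]; simp [hk]
      rw [Finset.sum_congr rfl fun k _ => this k, Finset.sum_ite_eq' Finset.univ l]
      simp
    have h2 : ∑ j, ∑ k, V i k * U j k = ∑ k, r k * V i k := by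
      rw [Finset.sum_comm]
      refine Finset.sum_congr rfl fun k _ => ?_
      rw [← Finset.mul_sum, hUcol k, mul_comm]
    rw [h1, h2] at h0
    exact h0
  -- trace equation
  have htr : ∑ k, (r k)⁻¹ * a k = 0 := by
    have h0 := htan2
    simp only [Matrix.trace, Matrix.diag, Matrix.mul_apply, Matrix.transpose_apply] at h0
    rw [← h0]
    refine Finset.sum_congr rfl fun k _ => ?_
    have : ∀ i, U i k * V i k = if i ∈ G k then (r k)⁻¹ * V i k else 0 := by
      intro i; by_cases h : i ∈ G k <;> simp [hUval, hUzero, h]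
    rw [Finset.sum_congr rfl fun i _ => this i, Finset.sum_ite_mem,
      Finset.univ_inter, Finset.mul_sum]
  -- entrywise bound on diagonal blocks
  have hVle : ∀ l i, i ∈ G l → V i l ≤ -((r l)⁻¹ * (r l)⁻¹ * s l) := by
    intro l i hi
    have h0 := hrow l i hi
    have hsplit : ∑ k, r k * V i k = r l * V i l + ∑ k ∈ Finset.univ.erase l, r k * V i k :=
      (Finset.add_sum_erase _ _ (Finset.mem_univ l)).symm
    have hoff : 0 ≤ ∑ k ∈ Finset.univ.erase l, r k * V i k := by
      refine Finset.sum_nonneg fun k hk => ?_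
      have hkl : k ≠ l := (Finset.mem_erase.mp hk).1
      have : i ∉ G k := fun h => hkl (hmemu h hi)
      exact mul_nonneg (hrpos k).le (hVnn i k this)
    have h1 : r l * V i l ≤ -((r l)⁻¹ * s l) := by nlinarith [hsplit, h0, hoff]
    have h2 := (hrpos l).ne'
    rw [← mul_le_mul_iff_right₀ (hrpos l)]
    calc r l * V i l ≤ -((r l)⁻¹ * s l) := h1
      _ = r l * -((r l)⁻¹ * (r l)⁻¹ * s l) := by field_simp
  have hale : ∀ l, 2 * a l + b l ≤ 0 := by
    intro l
    have h1 : a l ≤ c l * -((r l)⁻¹ * (r l)⁻¹ * s l) := by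
      have h1' : a l ≤ (G l).card • (-((r l)⁻¹ * (r l)⁻¹ * s l)) :=
        Finset.sum_le_card_nsmul _ _ _ fun i hi => hVle l i hi
      rw [nsmul_eq_mul] at h1'
      exact h1'
    have h2 : c l * -((r l)⁻¹ * (r l)⁻¹ * s l) = -(s l) := by
      rw [← hrr l]
      have h3 := (hrpos l).ne'
      field_simp
    rw [h2] at h1
    have := hsab l
    linarith
  have hanp : ∀ l, a l ≤ 0 := fun l => by linarith [hale l, hbnn l]
  have ha0 : ∀ l, a l = 0 := by
    intro l
    have hterm : ∀ k ∈ Finset.univ, (r k)⁻¹ * a k ≤ 0 := fun k _ =>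
      mul_nonpos_of_nonneg_of_nonpos (inv_nonneg.mpr (hrpos k).le) (hanp k)
    have h0 := (Finset.sum_eq_zero_iff_of_nonpos hterm).mp htr l (Finset.mem_univ l)
    rcases mul_eq_zero.mp h0 with h | h
    · exact absurd (inv_eq_zero.mp h) (hrpos l).ne'
    · exact h
  have hb0 : ∀ l, b l = 0 := fun l => le_antisymm (by linarith [hale l, ha0 l]) (hbnn l)
  have hoff0 : ∀ i k, i ∉ G k → V i k = 0 := by
    intro i k h
    have hsum := hb0 k
    rw [hb] at hsum
    have := (Finset.sum_eq_zero_iff_of_nonneg fun j hj =>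
      hVnn j k (Finset.mem_compl.mp hj)).mp hsum i (Finset.mem_compl.mpr h)
    exact this
  have hs0 : ∀ k, s k = 0 := fun k => by rw [hsab, ha0, hb0]; ring
  ext i k
  by_cases h : i ∈ G k
  · have h0 := hrow k i h
    rw [hs0 k] at h0
    have hsplit : ∑ l, r l * V i l = r k * V i k + ∑ l ∈ Finset.univ.erase k, r l * V i l :=
      (Finset.add_sum_erase _ _ (Finset.mem_univ k)).symm
    have hoff : ∑ l ∈ Finset.univ.erase k, r l * V i l = 0 := by
      refine Finset.sum_eq_zero fun l hl => ?_
      have hlk : l ≠ k := (Finset.mem_erase.mp hl).1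
      have : i ∉ G l := fun hh => hlk (hmemu hh h)
      rw [hoff0 i l this, mul_zero]
    have : r k * V i k = 0 := by
      rw [hsplit, hoff] at h0; simpa using h0
    have := mul_eq_zero.mp this
    rcases this with h' | h'
    · exact absurd h' (hrpos k).ne'
    · simpa using h'
  · simpa using hoff0 i k h
end

section
/- Let Z ∈ R^{n×n} be the symmetric block-diagonal membership matrix of a partition G_1 ⊔ ⋯ ⊔ G_K = [n] into nonempty sets, defined by Z_{ij} = 1/|G_k| if i, j ∈ G_k for some k, and Z_{ij} = 0 otherwise. Then there exists a unique (up to permutation of columns) entrywise-nonnegative U ∈ R_+^{n×K} such that Z = U U^T, namely the group assignment matrix with columns |G_k|^{-1/2} 1_{G_k}. -/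
open Matrix

/-- The membership matrix `Z` of a partition factors as `Z = UUᵀ` for the nonnegative
group assignment matrix `U`, uniquely up to a permutation of columns. -/
theorem stmt_19 (n K : ℕ) (hK : 1 ≤ K) (hn : K ≤ n)
    (G : Fin K → Finset (Fin n))
    (hdisj : ∀ k l, k ≠ l → Disjoint (G k) (G l))
    (hcover : ∀ i : Fin n, ∃ k, i ∈ G k)
    (hne : ∀ k, (G k).Nonempty)
    (Z : Matrix (Fin n) (Fin n) ℝ)
    (hZ : Z = fun i j => ∑ k, if i ∈ G k ∧ j ∈ G k then ((G k).card : ℝ)⁻¹ else 0)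
    (U₀ : Matrix (Fin n) (Fin K) ℝ)
    (hU₀ : U₀ = fun i k => if i ∈ G k then (Real.sqrt ((G k).card : ℝ))⁻¹ else 0) :
    ((∀ i k, 0 ≤ U₀ i k) ∧ Z = U₀ * U₀ᵀ) ∧
    (∀ U : Matrix (Fin n) (Fin K) ℝ,
      (∀ i k, 0 ≤ U i k) → Z = U * Uᵀ →
      ∃ σ : Equiv.Perm (Fin K), ∀ i k, U i k = U₀ i (σ k)) := by
  -- block assignment function
  have hgex := hcover
  set g : Fin n → Fin K := fun i => (hcover i).choose with hgdef
  have hgi : ∀ i, i ∈ G (g i) := fun i => (hcover i).choose_spec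
  have hg_uniq : ∀ i k, i ∈ G k → g i = k := by
    intro i k hik
    by_contra h
    exact Finset.disjoint_left.mp (hdisj (g i) k h) (hgi i) hik
  have hmpos : ∀ b, (0:ℝ) < ((G b).card : ℝ) := by
    intro b
    exact_mod_cast Finset.card_pos.mpr (hne b)
  have hZval : ∀ i j, Z i j = if j ∈ G (g i) then ((G (g i)).card : ℝ)⁻¹ else 0 := by
    intro i j
    simp only [hZ]
    rw [Finset.sum_eq_single (g i)]
    · simp [hgi i]
    · intro b _ hb
      rw [if_neg]
      rintro ⟨h1, _⟩
      exact hb (hg_uniq i b h1).symm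
    · intro h; exact absurd (Finset.mem_univ _) h
  have sqrt_key : ∀ (m : ℝ), 0 ≤ m → (Real.sqrt m)⁻¹ * (Real.sqrt m)⁻¹ = m⁻¹ := by
    intro m hm
    rw [← mul_inv, Real.mul_self_sqrt hm]
  refine ⟨⟨?_, ?_⟩, ?_⟩
  · intro i k
    simp only [hU₀]
    split
    · positivity
    · exact le_refl 0
  · ext i j
    rw [hZ]
    simp only [Matrix.mul_apply, Matrix.transpose_apply]; simp only [hU₀]
    refine Finset.sum_congr rfl fun k _ => ?_
    by_cases h1 : i ∈ G k <;> by_cases h2 : j ∈ G k <;>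
      simp [h1, h2, sqrt_key _ (Nat.cast_nonneg _)]
  · intro U hUpos hUZ
    have hdot : ∀ i j, ∑ k, U i k * U j k = Z i j := by
      intro i j
      rw [hUZ]
      simp [Matrix.mul_apply, Matrix.transpose_apply]
    have hdot_same : ∀ i j, g i = g j → ∑ k, U i k * U j k = ((G (g i)).card : ℝ)⁻¹ := by
      intro i j hij
      rw [hdot, hZval, if_pos]
      rw [hij]; exact hgi j
    have hdot_diff : ∀ i j, g i ≠ g j → ∀ k, U i k * U j k = 0 := by
      intro i j hij k
      have hsum : ∑ k, U i k * U j k = 0 := by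
        rw [hdot, hZval, if_neg]
        intro hj
        exact hij (hg_uniq j _ hj).symm
      have := (Finset.sum_eq_zero_iff_of_nonneg
        (fun k _ => mul_nonneg (hUpos i k) (hUpos j k))).mp hsum
      exact this k (Finset.mem_univ k)
    -- rows in a common block coincide
    have hrow : ∀ i j, g i = g j → ∀ k, U i k = U j k := by
      intro i j hij k
      have e1 := hdot_same i i rfl
      have e2 := hdot_same i j hij
      have e3 := hdot_same j j rfl
      rw [← hij] at e3
      have h0 : ∑ k, (U i k - U j k)^2 = 0 := by
        have expand : ∑ k, (U i k - U j k)^2 =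
            (∑ k, U i k * U i k) - 2 * (∑ k, U i k * U j k) + (∑ k, U j k * U j k) := by
          rw [Finset.mul_sum, ← Finset.sum_sub_distrib, ← Finset.sum_add_distrib]
          exact Finset.sum_congr rfl fun k _ => by ring
        rw [expand, e1, e2, e3]; ring
      have := (Finset.sum_eq_zero_iff_of_nonneg
        (fun k _ => sq_nonneg (U i k - U j k))).mp h0 k (Finset.mem_univ k)
      have := pow_eq_zero_iff (n := 2) (by norm_num) |>.mp this
      linarith [this]
    -- representative of each block
    set rep : Fin K → Fin n := fun b => (hne b).choose with hrepdef
    have hrep : ∀ b, rep b ∈ G b := fun b => (hne b).choose_spec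
    have hgrep : ∀ b, g (rep b) = b := fun b => hg_uniq _ _ (hrep b)
    set v : Fin K → Fin K → ℝ := fun b k => U (rep b) k with hvdef
    have hUv : ∀ i k, U i k = v (g i) k := by
      intro i k
      exact hrow i (rep (g i)) (by rw [hgrep]) k
    have hv_nonneg : ∀ b k, 0 ≤ v b k := fun b k => hUpos _ _
    have hv_norm : ∀ b, ∑ k, v b k * v b k = ((G b).card : ℝ)⁻¹ := by
      intro b
      have := hdot_same (rep b) (rep b) rfl
      rwa [hgrep] at this
    have hv_orth : ∀ b b', b ≠ b' → ∀ k, v b k * v b' k = 0 := by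
      intro b b' hbb k
      exact hdot_diff (rep b) (rep b') (by rw [hgrep, hgrep]; exact hbb) k
    have hex : ∀ b, ∃ k, v b k ≠ 0 := by
      intro b
      by_contra h
      push_neg at h
      have : ∑ k, v b k * v b k = 0 := Finset.sum_eq_zero fun k _ => by rw [h k]; ring
      rw [hv_norm] at this
      exact absurd this (inv_ne_zero (ne_of_gt (hmpos b)))
    choose f hf using hex
    have finj : Function.Injective f := by
      intro b b' hbb
      by_contra h
      have h0 : v b (f b) * v b' (f b) = 0 := hv_orth b b' h (f b)
      have h1 := hf b'
      rw [← hbb] at h1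
      exact (mul_ne_zero (hf b) h1) h0
    have fsurj : Function.Surjective f := Finite.surjective_of_injective finj
    have hown : ∀ b k, v b k ≠ 0 → f b = k := by
      intro b k hk
      obtain ⟨b', hb'⟩ := fsurj k
      rcases eq_or_ne b b' with rfl | hbb
      · exact hb'
      · exact absurd (hv_orth b b' hbb k) (mul_ne_zero hk (by rw [← hb'] at hk ⊢; exact hf b'))
    have hval : ∀ b, v b (f b) = (Real.sqrt ((G b).card : ℝ))⁻¹ := by
      intro b
      have hsum : ∑ k, v b k * v b k = v b (f b) * v b (f b) := by
        rw [Finset.sum_eq_single (f b)]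
        · intro k _ hk
          have : v b k = 0 := by
            by_contra h
            exact hk (hown b k h).symm
          rw [this]; ring
        · intro h; exact absurd (Finset.mem_univ _) h
      have h2 : v b (f b) * v b (f b) = ((G b).card : ℝ)⁻¹ := by
        rw [← hsum, hv_norm]
      have h3 : v b (f b) = Real.sqrt (((G b).card : ℝ)⁻¹) := by
        rw [← h2, Real.sqrt_mul_self (hv_nonneg b (f b))]
      rw [h3, Real.sqrt_inv]
    set e : Fin K ≃ Fin K := Equiv.ofBijective f ⟨finj, fsurj⟩ with hedef
    refine ⟨e.symm, ?_⟩
    intro i k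
    have hfe : ∀ b, e b = f b := fun b => rfl
    rcases eq_or_ne (e.symm k) (g i) with hk | hk
    · have hfk : f (g i) = k := by
        rw [← hfe, ← hk, Equiv.apply_symm_apply]
      rw [hUv, hU₀]
      simp only [hk]
      rw [if_pos (hgi i), ← hfk, hval]
    · rw [hUv, hU₀]
      simp only
      rw [if_neg]
      · by_contra h
        have := hown (g i) k h
        have : e (g i) = k := by rw [hfe]; exact this
        exact hk (by rw [← this, Equiv.symm_apply_apply])
      · intro hi
        exact hk ((hg_uniq i _ hi).symm)
end
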